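/- arXiv:1811.07448 — 2 statements merged into one kernel-verified Lean document; each statement's English description precedes it below -/
import Mathlib

section
/- Let k ≥ 2, n ≥ 2k, d ≥ 1 and let (G_0,...,G_r) be an (n,d,k,2k)-system of grids. Then for any 0 ≤ i ≤ r and any G_i-block B, it holds that |Par(B)| < 3^d · |B|. -/
open Finset

/-- `I[:ℓ]`: the set of the `ℓ` smallest elements of `I` (or `I` itself if `|I| < ℓ`). -/
def takeSmallest (I : Finset ℕ) (ℓ : ℕ) : Finset ℕ :=
  I.filter fun x => (I.filter fun y => y ≤ x).card ≤ ℓ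

/-- `I[ℓ+1:] = I \ I[:ℓ]`. -/
def dropSmallest (I : Finset ℕ) (ℓ : ℕ) : Finset ℕ :=
  I \ takeSmallest I ℓ

/-- An `(n,w)`-interval partition: a partition of `[n] = {1,…,n}` into consecutive,
pairwise disjoint intervals `I_1, …, I_t`, each of size `w` or `w+1`, where for `j < j'`
every element of `I j` is smaller than every element of `I j'`. -/
structure IntervalPartition (n w : ℕ) where
  t : ℕ
  I : Fin t → Finset ℕ
  interval : ∀ j, ∃ a b, 1 ≤ a ∧ a ≤ b ∧ b ≤ n ∧ I j = Finset.Icc a b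
  size : ∀ j, (I j).card = w ∨ (I j).card = w + 1
  cover : ∀ x ∈ Finset.Icc 1 n, ∃ j, x ∈ I j
  ordered : ∀ j j' : Fin t, j < j' → ∀ x ∈ I j, ∀ y ∈ I j', x < y

/-- The hypergrid `[n]^d`, as a set of tuples. -/
def cube (n d : ℕ) : Set (Fin d → ℕ) :=
  {x | ∀ i, 1 ≤ x i ∧ x i ≤ n}

/-- The `(n,d,k,w)`-grid induced by an `(n,w)`-interval partition. -/
def gridOf (n d k w : ℕ) (P : IntervalPartition n w) : Set (Fin d → ℕ) :=
  {x ∈ cube n d | ∃ i : Fin d, ∃ j : Fin P.t, x i ∈ takeSmallest (P.I j) (k - 1)}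

/-- `G ∈ 𝒢(n,d,k,w)`: `G` is the grid induced by some `(n,w)`-interval partition. -/
def IsGrid (n d k w : ℕ) (G : Set (Fin d → ℕ)) : Prop :=
  ∃ P : IntervalPartition n w, G = gridOf n d k w P

/-- Two entries of `[n]^d` are neighbors if `∑ i, |x i − y i| = 1`. -/
def Neighbor {d : ℕ} (x y : Fin d → ℕ) : Prop :=
  (∑ i, Nat.dist (x i) (y i)) = 1

/-- A `G`-block: a connected component of the neighborhood graph on `[n]^d \ G`. -/
def IsBlock (n d : ℕ) (G B : Set (Fin d → ℕ)) : Prop :=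
  B.Nonempty ∧ B ⊆ cube n d \ G ∧
    (∀ x ∈ B, ∀ y ∈ B,
      Relation.ReflTransGen
        (fun a b => a ∈ cube n d \ G ∧ b ∈ cube n d \ G ∧ Neighbor a b) x y) ∧
    (∀ x ∈ B, ∀ y, y ∈ cube n d \ G → Neighbor x y → y ∈ B)

/-- The closure `B̄` of a block `B`. -/
def blockClosure (n d k : ℕ) (B : Set (Fin d → ℕ)) : Set (Fin d → ℕ) :=
  {x ∈ cube n d | ∃ y ∈ B, ∀ i, Nat.dist (x i) (y i) < k}

/-- The boundary `∂B = B̄ \ B` of a block `B`. -/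
def blockBoundary (n d k : ℕ) (B : Set (Fin d → ℕ)) : Set (Fin d → ℕ) :=
  blockClosure n d k B \ B

/-- A valid location of a width-`k` subarray in `[n]^d`: an element of `[n−k+1]^d`. -/
def ValidLoc (n d k : ℕ) (a : Fin d → ℕ) : Prop :=
  ∀ i, 1 ≤ a i ∧ a i ≤ n - k + 1

/-- The width-`k` box with lowest corner `a`: `{a_1,…,a_1+k−1} × ⋯ × {a_d,…,a_d+k−1}`. -/
def kbox (d k : ℕ) (a : Fin d → ℕ) : Set (Fin d → ℕ) :=
  {x | ∀ i, a i ≤ x i ∧ x i ≤ a i + k - 1}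

/-- Some forbidden pattern of `F` occurs as a consecutive subarray of `A` at location `a`;
patterns are compared on `[k]^d`. -/
def HasCopyAt {σ : Type*} (d k : ℕ) (F : Set ((Fin d → ℕ) → σ))
    (A : (Fin d → ℕ) → σ) (a : Fin d → ℕ) : Prop :=
  ∃ S ∈ F, ∀ j : Fin d → ℕ, (∀ i, 1 ≤ j i ∧ j i ≤ k) →
    A (fun i => a i + j i - 1) = S j

/-- `A` contains an `F`-copy lying inside the set `X`. -/
def HasCopyIn {σ : Type*} (n d k : ℕ) (F : Set ((Fin d → ℕ) → σ))
    (A : (Fin d → ℕ) → σ) (X : Set (Fin d → ℕ)) : Prop :=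
  ∃ a, ValidLoc n d k a ∧ HasCopyAt d k F A a ∧ kbox d k a ⊆ X

/-- `A` satisfies the `k`-local property `P(F)`: it contains no `F`-copy. -/
def SatisfiesP {σ : Type*} (n d k : ℕ) (F : Set ((Fin d → ℕ) → σ))
    (A : (Fin d → ℕ) → σ) : Prop :=
  ¬ ∃ a, ValidLoc n d k a ∧ HasCopyAt d k F A a

/-- `A` is `ε`-far from `P(F)`: every array satisfying `P(F)` differs from `A`
in at least `ε·n^d` entries of `[n]^d`. -/
def FarFrom {σ : Type*} (n d k : ℕ) (F : Set ((Fin d → ℕ) → σ)) (ε : ℝ)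
    (A : (Fin d → ℕ) → σ) : Prop :=
  ∀ A' : (Fin d → ℕ) → σ, SatisfiesP n d k F A' →
    ε * (n : ℝ) ^ d ≤ ({x | x ∈ cube n d ∧ A x ≠ A' x}).ncard

/-- A block `B` is `(P,A)`-unrepairable: every array agreeing with `A` on `∂B`
(including `A` itself) contains an `F`-copy lying inside `B̄`. -/
def Unrepairable {σ : Type*} (n d k : ℕ) (F : Set ((Fin d → ℕ) → σ))
    (A : (Fin d → ℕ) → σ) (B : Set (Fin d → ℕ)) : Prop :=
  ∀ A' : (Fin d → ℕ) → σ, (∀ x ∈ blockBoundary n d k B, A' x = A x) →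
    HasCopyIn n d k F A' (blockClosure n d k B)

/-- `r = ⌊log₂(n/w)⌋`. -/
def sysR (n w : ℕ) : ℕ := Nat.log 2 (n / w)

/-- An `(n,d,k,w)`-system of grids `(G_0, …, G_r)` with `r = ⌊log₂(n/w)⌋`:
`G_i ∈ 𝒢(n,d,k,⌊n/2^(r−i)⌋)` and `G_0 ⊇ G_1 ⊇ ⋯ ⊇ G_r`. -/
structure GridSystem (n d k w : ℕ) where
  G : ℕ → Set (Fin d → ℕ)
  isGrid : ∀ i ≤ sysR n w, IsGrid n d k (n / 2 ^ (sysR n w - i)) (G i)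
  nested : ∀ i j : ℕ, j ≤ i → i ≤ sysR n w → G i ⊆ G j

/-- A `G_i`-block `B` is a `(P,A)`-witness: either `i = 0` and `A` contains an `F`-copy
inside `B̄`, or `i > 0` and `B` is `(P,A)`-unrepairable. -/
def IsWitness {σ : Type*} (n d k w : ℕ) (S : GridSystem n d k w)
    (F : Set ((Fin d → ℕ) → σ)) (A : (Fin d → ℕ) → σ)
    (i : ℕ) (B : Set (Fin d → ℕ)) : Prop :=
  i ≤ sysR n w ∧ IsBlock n d (S.G i) B ∧
    ((i = 0 ∧ HasCopyIn n d k F A (blockClosure n d k B)) ∨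
      (0 < i ∧ Unrepairable n d k F A B))

/-- A witness is maximal if all of its ancestors (blocks of coarser grids containing it)
are `(P,A)`-repairable. -/
def IsMaximalWitness {σ : Type*} (n d k w : ℕ) (S : GridSystem n d k w)
    (F : Set ((Fin d → ℕ) → σ)) (A : (Fin d → ℕ) → σ)
    (i : ℕ) (B : Set (Fin d → ℕ)) : Prop :=
  IsWitness n d k w S F A i B ∧
    ∀ j, i < j → j ≤ sysR n w → ∀ B', IsBlock n d (S.G j) B' → B ⊆ B' →
      ¬ Unrepairable n d k F A B'

/-- The family `W` of all maximal `(P,A)`-witness blocks. -/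
def MaxWitnessFamily {σ : Type*} (n d k w : ℕ) (S : GridSystem n d k w)
    (F : Set ((Fin d → ℕ) → σ)) (A : (Fin d → ℕ) → σ) :
    Set (Set (Fin d → ℕ)) :=
  {B | ∃ i, IsMaximalWitness n d k w S F A i B}

/-- `Par(B)` for a `G_i`-block `B`: the `G_{i+1}`-block containing `B` if `i < r`
(expressed as the union of all such blocks, of which there is exactly one), and
`[n]^d` for `i = r`. -/
def parentSet (n d k w : ℕ) (S : GridSystem n d k w) (i : ℕ)
    (B : Set (Fin d → ℕ)) : Set (Fin d → ℕ) :=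
  if i = sysR n w then cube n d
  else ⋃₀ {B' | IsBlock n d (S.G (i + 1)) B' ∧ B ⊆ B'}
section OneDim
variable {n w k : ℕ}

lemma mem_takeSmallest_Icc {a b ℓ x : ℕ} :
    x ∈ takeSmallest (Finset.Icc a b) ℓ ↔ a ≤ x ∧ x ≤ b ∧ x < a + ℓ := by
  have hfil : ((Finset.Icc a b).filter fun y => y ≤ x) = Finset.Icc a (min b x) := by
    ext y; simp only [Finset.mem_filter, Finset.mem_Icc]; omega
  simp only [takeSmallest, Finset.mem_filter, hfil, Nat.card_Icc, Finset.mem_Icc]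
  omega

/-- `Ivl P a b` : `Finset.Icc a b` is one of the intervals of the partition `P`. -/
def Ivl (P : IntervalPartition n w) (a b : ℕ) : Prop :=
  1 ≤ a ∧ a ≤ b ∧ b ≤ n ∧ ∃ j, P.I j = Finset.Icc a b

lemma Ivl.size {P : IntervalPartition n w} {a b : ℕ} (h : Ivl P a b) :
    b + 1 - a = w ∨ b + 1 - a = w + 1 := by
  obtain ⟨_, hab, _, j, hj⟩ := h
  have hs := P.size j
  rw [hj, Nat.card_Icc] at hs
  omega

lemma exists_ivl (P : IntervalPartition n w) {x : ℕ} (h1 : 1 ≤ x) (h2 : x ≤ n) :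
    ∃ a b, Ivl P a b ∧ a ≤ x ∧ x ≤ b := by
  obtain ⟨j, hj⟩ := P.cover x (by simp only [Finset.mem_Icc]; omega)
  obtain ⟨a, b, ha, hab, hb, hIj⟩ := P.interval j
  rw [hIj, Finset.mem_Icc] at hj
  exact ⟨a, b, ⟨ha, hab, hb, j, hIj⟩, hj.1, hj.2⟩

lemma ivl_unique {P : IntervalPartition n w} {a b a' b' x : ℕ}
    (h : Ivl P a b) (h' : Ivl P a' b') (hx : a ≤ x) (hxb : x ≤ b)
    (hx' : a' ≤ x) (hxb' : x ≤ b') : a = a' ∧ b = b' := by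
  obtain ⟨ha1, hab, hbn, j, hj⟩ := h
  obtain ⟨ha1', hab', hbn', j', hj'⟩ := h'
  have hxj : x ∈ P.I j := by rw [hj, Finset.mem_Icc]; exact ⟨hx, hxb⟩
  have hxj' : x ∈ P.I j' := by rw [hj', Finset.mem_Icc]; exact ⟨hx', hxb'⟩
  have hjj : j = j' := by
    rcases lt_trichotomy j j' with h | h | h
    · exact absurd (P.ordered j j' h x hxj x hxj') (lt_irrefl x)
    · exact h
    · exact absurd (P.ordered j' j h x hxj' x hxj) (lt_irrefl x)
  subst hjj
  rw [hj] at hj'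
  have h1 := Finset.ext_iff.mp hj' a
  have h2 := Finset.ext_iff.mp hj' b
  have h3 := Finset.ext_iff.mp hj' a'
  have h4 := Finset.ext_iff.mp hj' b'
  simp only [Finset.mem_Icc] at h1 h2 h3 h4
  omega

lemma ivl_next {P : IntervalPartition n w} {a b : ℕ} (h : Ivl P a b) (hb : b < n) :
    ∃ b2, Ivl P (b + 1) b2 := by
  obtain ⟨c, e, hce, h1, h2⟩ := exists_ivl P (x := b + 1) (by omega) (by omega)
  obtain ⟨ha1, hab, hbn, j, hj⟩ := h
  obtain ⟨hc1, hce', hen, j', hj'⟩ := hce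
  have hbj : b ∈ P.I j := by rw [hj, Finset.mem_Icc]; omega
  have hbj' : (b + 1) ∈ P.I j' := by rw [hj', Finset.mem_Icc]; omega
  have hcj' : c ∈ P.I j' := by rw [hj', Finset.mem_Icc]; omega
  have hcb : b < c := by
    rcases lt_trichotomy j j' with hlt | heq | hgt
    · exact P.ordered j j' hlt b hbj c hcj'
    · exfalso; subst heq; rw [hj, Finset.mem_Icc] at hbj'; omega
    · exfalso; exact absurd (P.ordered j' j hgt (b+1) hbj' b hbj) (by omega)
  have hc : c = b + 1 := by omega
  exact ⟨e, by rw [← hc]; exact ⟨hc1, hce', hen, j', hj'⟩⟩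

end OneDim
section OneDim2
variable {n w k : ℕ}

/-- `x` lies in the "good" (kept) part of its interval. -/
def GoodAt (k : ℕ) {n w : ℕ} (P : IntervalPartition n w) (x : ℕ) : Prop :=
  ∃ a b, Ivl P a b ∧ a ≤ x ∧ x ≤ b ∧ a + k ≤ x + 1

/-- `x` lies among the `k-1` smallest elements of its interval. -/
def BadAt (k : ℕ) {n w : ℕ} (P : IntervalPartition n w) (x : ℕ) : Prop :=
  ∃ a b, Ivl P a b ∧ a ≤ x ∧ x ≤ b ∧ x + 2 ≤ a + k

lemma good_or_bad (P : IntervalPartition n w) {x : ℕ} (h1 : 1 ≤ x) (h2 : x ≤ n) :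
    GoodAt k P x ∨ BadAt k P x := by
  obtain ⟨a, b, hivl, ha, hb⟩ := exists_ivl P h1 h2
  by_cases h : a + k ≤ x + 1
  · exact Or.inl ⟨a, b, hivl, ha, hb, h⟩
  · exact Or.inr ⟨a, b, hivl, ha, hb, by omega⟩

lemma not_good_and_bad {P : IntervalPartition n w} {x : ℕ}
    (hg : GoodAt k P x) (hb : BadAt k P x) : False := by
  obtain ⟨a, b, hivl, h1, h2, h3⟩ := hg
  obtain ⟨a', b', hivl', h1', h2', h3'⟩ := hb
  obtain ⟨e1, e2⟩ := ivl_unique hivl hivl' h1 h2 h1' h2'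
  omega

lemma badAt_iff {P : IntervalPartition n w} (hk : 1 ≤ k) {x : ℕ} :
    (∃ j, x ∈ takeSmallest (P.I j) (k - 1)) ↔ BadAt k P x := by
  constructor
  · rintro ⟨j, hj⟩
    obtain ⟨a, b, ha, hab, hb, hIj⟩ := P.interval j
    rw [hIj, mem_takeSmallest_Icc] at hj
    exact ⟨a, b, ⟨ha, hab, hb, j, hIj⟩, hj.1, hj.2.1, by omega⟩
  · rintro ⟨a, b, ⟨ha, hab, hb, j, hj⟩, h1, h2, h3⟩
    exact ⟨j, by rw [hj, mem_takeSmallest_Icc]; omega⟩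

lemma mem_compl_grid_iff {d : ℕ} (hk : 1 ≤ k) {P : IntervalPartition n w}
    {x : Fin d → ℕ} :
    x ∈ cube n d \ gridOf n d k w P ↔ ∀ i, GoodAt k P (x i) := by
  constructor
  · rintro ⟨hc, hg⟩ i
    have hx := hc i
    rcases good_or_bad (k := k) P hx.1 hx.2 with h | h
    · exact h
    · exfalso
      obtain ⟨j, hj⟩ := (badAt_iff hk).mpr h
      exact hg ⟨hc, i, j, hj⟩
  · intro h
    have hc : x ∈ cube n d := by
      intro i
      obtain ⟨a, b, hivl, h1, h2, h3⟩ := h i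
      exact ⟨le_trans hivl.1 h1, le_trans h2 hivl.2.2.1⟩
    refine ⟨hc, ?_⟩
    rintro ⟨-, i, j, hj⟩
    exact not_good_and_bad (h i) ((badAt_iff hk).mp ⟨j, hj⟩)

lemma good_step (hk : 2 ≤ k) {P : IntervalPartition n w} {a b u v : ℕ}
    (hivl : Ivl P a b) (hu1 : a ≤ u) (hu2 : u ≤ b) (hu3 : a + k ≤ u + 1)
    (hv : GoodAt k P v) (hd : Nat.dist u v ≤ 1) :
    a ≤ v ∧ v ≤ b ∧ a + k ≤ v + 1 := by
  obtain ⟨c, e, hivl', hc, he, hgood⟩ := hv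
  have hcases : v = u ∨ v = u + 1 ∨ u = v + 1 := by
    simp only [Nat.dist] at hd; omega
  have hmem : a ≤ v ∧ v ≤ b := by
    rcases hcases with h | h | h
    · omega
    · by_cases hvb : v ≤ b
      · omega
      · exfalso
        have hvb1 : v = b + 1 := by omega
        have hen : e ≤ n := hivl'.2.2.1
        have hbn : b < n := by omega
        obtain ⟨b2, hnext⟩ := ivl_next hivl hbn
        have hb2 : b + 1 ≤ b2 := hnext.2.1
        obtain ⟨hc2, -⟩ := ivl_unique hnext hivl' (by omega) (by omega) hc he
        omega
    · have : a ≤ v := by omega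
      omega
  obtain ⟨h1, h2⟩ := ivl_unique hivl hivl' hmem.1 hmem.2 hc he
  exact ⟨hmem.1, hmem.2, by omega⟩

lemma neighbor_dist_le {d : ℕ} {u v : Fin d → ℕ} (h : Neighbor u v) (i : Fin d) :
    Nat.dist (u i) (v i) ≤ 1 := by
  have h2 : Nat.dist (u i) (v i) ≤ ∑ j, Nat.dist (u j) (v j) :=
    Finset.single_le_sum (f := fun j => Nat.dist (u j) (v j))
      (fun _ _ => Nat.zero_le _) (Finset.mem_univ i)
  rw [h] at h2
  exact h2

lemma reach_confine {d : ℕ} (hk : 2 ≤ k) {P : IntervalPartition n w}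
    {x y : Fin d → ℕ}
    (hpath : Relation.ReflTransGen
      (fun u v => u ∈ cube n d \ gridOf n d k w P ∧
        v ∈ cube n d \ gridOf n d k w P ∧ Neighbor u v) x y)
    {a b : Fin d → ℕ} (hivl : ∀ i, Ivl P (a i) (b i))
    (hx : ∀ i, a i ≤ x i ∧ x i ≤ b i ∧ a i + k ≤ x i + 1) :
    ∀ i, a i ≤ y i ∧ y i ≤ b i ∧ a i + k ≤ y i + 1 := by
  induction hpath with
  | refl => exact hx
  | tail hsteps hrel ih =>
    intro i
    obtain ⟨hu, hv, hnb⟩ := hrel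
    exact good_step hk (hivl i) (ih i).1 (ih i).2.1 (ih i).2.2
      ((mem_compl_grid_iff (by omega)).mp hv i) (neighbor_dist_le hnb i)

end OneDim2
section Fill
variable {n w k : ℕ}

lemma pi_subset_compl {d : ℕ} (hk : 2 ≤ k) {P : IntervalPartition n w}
    {a b : Fin d → ℕ} (hivl : ∀ i, Ivl P (a i) (b i)) :
    ∀ z : Fin d → ℕ, (∀ i, a i + k ≤ z i + 1 ∧ z i ≤ b i) →
      z ∈ cube n d \ gridOf n d k w P := by
  intro z hz
  apply (mem_compl_grid_iff (k := k) (by omega)).mpr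
  intro i
  exact ⟨a i, b i, hivl i, by have := hz i; omega, (hz i).2, (hz i).1⟩

lemma pi_subset_block {d : ℕ} (hk : 2 ≤ k) {P : IntervalPartition n w}
    {B : Set (Fin d → ℕ)} (hB : IsBlock n d (gridOf n d k w P) B)
    {x : Fin d → ℕ} (hxB : x ∈ B) {a b : Fin d → ℕ}
    (hivl : ∀ i, Ivl P (a i) (b i))
    (hx : ∀ i, a i ≤ x i ∧ x i ≤ b i ∧ a i + k ≤ x i + 1) :
    ∀ y : Fin d → ℕ, (∀ i, a i + k ≤ y i + 1 ∧ y i ≤ b i) → y ∈ B := by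
  suffices H : ∀ N : ℕ, ∀ y : Fin d → ℕ,
      (∀ i, a i + k ≤ y i + 1 ∧ y i ≤ b i) →
      (∑ i, Nat.dist (x i) (y i)) ≤ N → y ∈ B by
    intro y hy; exact H _ y hy le_rfl
  intro N
  induction N with
  | zero =>
    intro y hy hsum
    have hxy : x = y := by
      funext i
      have h0 : Nat.dist (x i) (y i) ≤ 0 := le_trans
        (Finset.single_le_sum (f := fun j => Nat.dist (x j) (y j))
          (fun _ _ => Nat.zero_le _) (Finset.mem_univ i)) hsum
      simp only [Nat.dist] at h0; omega
    exact hxy ▸ hxB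
  | succ N ih =>
    intro y hy hsum
    by_cases hle : (∑ i, Nat.dist (x i) (y i)) ≤ N
    · exact ih y hy hle
    · have hpos : ∃ i, x i ≠ y i := by
        by_contra hc
        push_neg at hc
        have : (∑ i, Nat.dist (x i) (y i)) = 0 := by
          apply Finset.sum_eq_zero
          intro i _
          simp [hc i, Nat.dist]
        omega
      obtain ⟨i, hi⟩ := hpos
      set z : ℕ := if x i < y i then y i - 1 else y i + 1 with hzdef
      have hzi : Nat.dist (x i) z + 1 = Nat.dist (x i) (y i) ∧ Nat.dist z (y i) = 1
          ∧ a i + k ≤ z + 1 ∧ z ≤ b i := by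
        have hxi := hx i
        have hyi := hy i
        by_cases hc : x i < y i
        · simp only [hzdef, if_pos hc, Nat.dist]
          omega
        · simp only [hzdef, if_neg hc, Nat.dist]
          omega
      set y' : Fin d → ℕ := Function.update y i z with hy'def
      have hy'mem : ∀ j, a j + k ≤ y' j + 1 ∧ y' j ≤ b j := by
        intro j
        by_cases hji : j = i
        · subst hji; simp only [hy'def, Function.update_self]; exact ⟨hzi.2.2.1, hzi.2.2.2⟩
        · simp only [hy'def, Function.update_of_ne hji]; exact hy j
      have hfun1 : (fun j => Nat.dist (x j) (y' j)) =
          Function.update (fun j => Nat.dist (x j) (y j)) i (Nat.dist (x i) z) := by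
        funext j
        by_cases hji : j = i
        · subst hji; simp [hy'def]
        · simp [hy'def, Function.update_of_ne hji]
      have hsum1 : (∑ j, Nat.dist (x j) (y' j)) + 1 = ∑ j, Nat.dist (x j) (y j) := by
        rw [hfun1, Finset.sum_update_of_mem (Finset.mem_univ i)]
        rw [← Finset.add_sum_erase Finset.univ _ (Finset.mem_univ i)]
        rw [Finset.sdiff_singleton_eq_erase]
        omega
      have hy'B : y' ∈ B := ih y' hy'mem (by omega)
      have hnb : Neighbor y' y := by
        unfold Neighbor
        have hfun2 : (fun j => Nat.dist (y' j) (y j)) =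
            Function.update (fun _ : Fin d => (0 : ℕ)) i 1 := by
          funext j
          by_cases hji : j = i
          · subst hji; simp [hy'def, hzi.2.1]
          · simp [hy'def, Function.update_of_ne hji, Nat.dist]
        rw [hfun2, Finset.sum_update_of_mem (Finset.mem_univ i)]
        simp
      exact hB.2.2.2 y' hy'B y (pi_subset_compl hk hivl y hy) hnb

end Fill
section Align
variable {n k w w' : ℕ}

lemma align_start (hk : 2 ≤ k) (hw : 2 * k ≤ w) (hw1 : 2 * w ≤ w')
    {C : IntervalPartition n w} {D : IntervalPartition n w'}
    (hbad : ∀ m, BadAt k D m → BadAt k C m)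
    {a' b' : ℕ} (h : Ivl D a' b') : ∃ e, Ivl C a' e := by
  have hsz := h.size
  have hab' : a' ≤ b' := h.2.1
  have hb1 : BadAt k D a' := ⟨a', b', h, le_rfl, hab', by omega⟩
  obtain ⟨c, e, hce, hc, he', hbadc⟩ := hbad _ hb1
  have hz : a' + k - 2 ≤ b' := by omega
  have hb2 : BadAt k D (a' + k - 2) := ⟨a', b', h, by omega, hz, by omega⟩
  obtain ⟨c2, e2, hce2, hc2, he2, hbad2⟩ := hbad _ hb2
  have hesz := hce.size
  have hcee : c ≤ e := hce.2.1
  have hze : a' + k - 2 ≤ e := by omega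
  obtain ⟨hcc, hee⟩ := ivl_unique hce hce2 (x := a' + k - 2) (by omega) hze hc2 he2
  have hca : c = a' := by omega
  exact ⟨e, hca ▸ hce⟩

lemma align_end (hk : 2 ≤ k) (hw : 2 * k ≤ w) (hw1 : 2 * w ≤ w')
    {C : IntervalPartition n w} {D : IntervalPartition n w'}
    (hbad : ∀ m, BadAt k D m → BadAt k C m)
    {a' b' : ℕ} (h : Ivl D a' b') : ∃ c, Ivl C c b' := by
  by_cases hbn : b' < n
  · obtain ⟨b2, hnext⟩ := ivl_next h hbn
    obtain ⟨e2, hstart⟩ := align_start hk hw hw1 hbad hnext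
    have h1b : 1 ≤ b' := le_trans h.1 h.2.1
    obtain ⟨c, e, hce, hc, he⟩ := exists_ivl C (x := b') h1b (le_of_lt hbn)
    by_cases heb : e ≤ b'
    · have : e = b' := le_antisymm heb he
      exact ⟨c, this ▸ hce⟩
    · exfalso
      obtain ⟨h1, h2⟩ := ivl_unique hce hstart (x := b' + 1) (by omega) (by omega)
        le_rfl hstart.2.1
      omega
  · have hbn' : b' = n := le_antisymm h.2.2.1 (not_lt.mp hbn)
    have h1n : 1 ≤ n := by have := h.1; have := h.2.1; have := h.2.2.1; omega
    obtain ⟨c, e, hce, hc, he⟩ := exists_ivl C (x := n) h1n le_rfl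
    have hen : e = n := le_antisymm hce.2.2.1 he
    exact ⟨c, by rw [hbn']; exact hen ▸ hce⟩

lemma dim_bound (hk : 2 ≤ k) (hw : 2 * k ≤ w) (hw1 : 2 * w ≤ w') (hw2 : w' ≤ 2 * w + 1)
    {C : IntervalPartition n w} {D : IntervalPartition n w'}
    (hbad : ∀ m, BadAt k D m → BadAt k C m)
    {a b a' b' m : ℕ} (hC : Ivl C a b) (hD : Ivl D a' b')
    (h1 : a ≤ m) (h2 : m ≤ b) (h3 : a' ≤ m) (h4 : m ≤ b') :
    (b' - a') + 2 * k ≤ 3 * (b - a) + 3 := by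
  have hCs := hC.size
  have hDs := hD.size
  have haa : a' ≤ a := by
    by_contra hlt
    push_neg at hlt
    obtain ⟨e, he⟩ := align_start hk hw hw1 hbad hD
    obtain ⟨hq1, hq2⟩ := ivl_unique hC he (x := a') (by omega) (by omega) le_rfl he.2.1
    omega
  have hbb : b ≤ b' := by
    by_contra hlt
    push_neg at hlt
    obtain ⟨c, hc⟩ := align_end hk hw hw1 hbad hD
    obtain ⟨hq1, hq2⟩ := ivl_unique hC hc (x := b') (by omega) (by omega) hc.2.1 le_rfl
    omega
  -- right side analysis
  have hR : b < b' → w ≤ b' - b ∧ b' - b ≤ w + 1 := by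
    intro hbb'
    have hbn : b < n := lt_of_lt_of_le hbb' hD.2.2.1
    obtain ⟨e2, hnext⟩ := ivl_next hC hbn
    obtain ⟨c1, hc1⟩ := align_end hk hw hw1 hbad hD
    have hc1b : c1 ≤ b' := hc1.2.1
    have he2b : e2 ≤ b' := by
      by_contra hgt
      push_neg at hgt
      obtain ⟨hq1, hq2⟩ := ivl_unique hnext hc1 (x := b') (by omega) (by omega)
        hc1b le_rfl
      omega
    have hs1 := hnext.size
    have he2nn := hnext.2.1
    constructor
    · omega
    · by_cases he2 : e2 = b'
      · omega
      · exfalso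
        have he2n : e2 < n := lt_of_lt_of_le (by omega) hD.2.2.1
        obtain ⟨e3, hnext2⟩ := ivl_next hnext he2n
        have he3 : e3 ≤ b' := by
          by_contra hgt
          push_neg at hgt
          obtain ⟨hq1, hq2⟩ := ivl_unique hnext2 hc1 (x := b') (by omega) (by omega)
            hc1b le_rfl
          omega
        have hs2 := hnext2.size
        omega
  -- left side analysis
  have hL : a' < a → w ≤ a - a' ∧ a - a' ≤ w + 1 := by
    intro haa'
    obtain ⟨e1, he1⟩ := align_start hk hw hw1 hbad hD
    have he1nn := he1.2.1
    have he1a : e1 < a := by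
      by_contra hge
      push_neg at hge
      obtain ⟨hq1, hq2⟩ := ivl_unique hC he1 (x := a) le_rfl hC.2.1 (by omega) hge
      omega
    have hs1 := he1.size
    constructor
    · omega
    · by_cases he1a' : e1 = a - 1
      · omega
      · exfalso
        have he1n : e1 < n := by
          have := hC.2.2.1; have := hC.2.1; omega
        obtain ⟨e2, hnext⟩ := ivl_next he1 he1n
        have he2a : e2 < a := by
          by_contra hge
          push_neg at hge
          obtain ⟨hq1, hq2⟩ := ivl_unique hC hnext (x := a) le_rfl hC.2.1 (by omega) hge
          omega
        have hs2 := hnext.size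
        omega
  rcases Nat.lt_or_ge a' a with haa' | haa2
  · have hLl := hL haa'
    have hbb2 : b = b' := by
      by_contra hne
      have hRr := hR (by omega)
      omega
    omega
  · have haeq : a' = a := le_antisymm haa (by omega)
    by_cases hbb' : b < b'
    · have hRr := hR hbb'
      omega
    · omega

end Align
lemma cube_eq_pi (n d : ℕ) :
    cube n d = ↑(Fintype.piFinset fun _ : Fin d => Finset.Icc 1 n) := by
  ext x
  rw [Finset.mem_coe, Fintype.mem_piFinset]
  simp only [cube, Set.mem_setOf_eq, Finset.mem_Icc]

/-- In an `(n,d,k,2k)`-system of grids, for any `0 ≤ i ≤ r` and any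
`G_i`-block `B`, we have `|Par(B)| < 3^d · |B|`. -/
theorem parent_size_lt (n d k : ℕ) (hd : 1 ≤ d) (hk : 2 ≤ k) (hn : 2 * k ≤ n)
    (S : GridSystem n d k (2 * k)) (i : ℕ) (hi : i ≤ sysR n (2 * k))
    (B : Set (Fin d → ℕ)) (hB : IsBlock n d (S.G i) B) :
    (parentSet n d k (2 * k) S i B).ncard < 3 ^ d * B.ncard := by
  have hklt : (0 : ℕ) < 2 * k := by omega
  -- basic facts about the widths
  have hlog : 2 ^ sysR n (2 * k) * (2 * k) ≤ n := by
    have h1 : 2 ^ Nat.log 2 (n / (2 * k)) ≤ n / (2 * k) :=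
      Nat.pow_log_le_self 2 (by
        have : 1 ≤ n / (2 * k) := (Nat.one_le_div_iff hklt).mpr hn
        omega)
    have h2 : 2 ^ sysR n (2 * k) ≤ n / (2 * k) := h1
    calc 2 ^ sysR n (2 * k) * (2 * k) ≤ (n / (2 * k)) * (2 * k) :=
          Nat.mul_le_mul_right _ h2
      _ ≤ n := Nat.div_mul_le_self n (2 * k)
  have hw2k : ∀ m, 2 * k ≤ n / 2 ^ (sysR n (2 * k) - m) := by
    intro m
    have h0 : 2 * k ≤ n / 2 ^ sysR n (2 * k) :=
      (Nat.le_div_iff_mul_le (Nat.pow_pos (by norm_num))).mpr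
        (by rw [Nat.mul_comm]; exact hlog)
    exact le_trans h0 (Nat.div_le_div_left
      (Nat.pow_le_pow_right (by norm_num) (Nat.sub_le _ _))
      (Nat.pow_pos (by norm_num)))
  -- the grid at level i and the block structure
  obtain ⟨C, hGC⟩ := S.isGrid i hi
  have hwk : 2 * k ≤ n / 2 ^ (sysR n (2 * k) - i) := hw2k i
  have hBC : IsBlock n d (gridOf n d k (n / 2 ^ (sysR n (2 * k) - i)) C) B := by
    have h := hB; rw [hGC] at h; exact h
  obtain ⟨x0, hx0⟩ := hB.1
  have hx0c : x0 ∈ cube n d \ gridOf n d k (n / 2 ^ (sysR n (2 * k) - i)) C := hBC.2.1 hx0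
  have hgood := (mem_compl_grid_iff (k := k) (by omega)).mp hx0c
  choose a b hab ha hb hg using hgood
  have hs : ∀ i', b i' + 1 - a i' = n / 2 ^ (sysR n (2 * k) - i) ∨
      b i' + 1 - a i' = n / 2 ^ (sysR n (2 * k) - i) + 1 :=
    fun i' => (hab i').size
  -- lower bound for |B|
  set Tc := Fintype.piFinset (fun i' => Finset.Icc (a i' + k - 1) (b i')) with hTcdef
  have hTcB : ↑Tc ⊆ B := by
    intro y hy
    apply pi_subset_block hk hBC hx0 hab (fun i' => ⟨ha i', hb i', hg i'⟩)
    intro i'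
    have hyi := Fintype.mem_piFinset.mp hy i'
    rw [Finset.mem_Icc] at hyi
    have ha1 := (hab i').1
    constructor <;> omega
  have hBfin : B.Finite := by
    apply Set.Finite.subset (s := cube n d)
    · rw [cube_eq_pi n d]; exact Finset.finite_toSet _
    · intro z hz; exact (hBC.2.1 hz).1
  have hlow : (∏ i', (b i' + 1 - (a i' + k - 1))) ≤ B.ncard := by
    calc (∏ i', (b i' + 1 - (a i' + k - 1))) = Tc.card := by
          rw [hTcdef, Fintype.card_piFinset]
          simp [Nat.card_Icc]
      _ = (↑Tc : Set (Fin d → ℕ)).ncard := (Set.ncard_coe_finset Tc).symm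
      _ ≤ B.ncard := Set.ncard_le_ncard hTcB hBfin
  have hspos : ∀ i', 2 ≤ b i' + 1 - (a i' + k - 1) := by
    intro i'
    have := hs i'
    have ha1 := (hab i').1
    omega
  have huniv : (Finset.univ : Finset (Fin d)).Nonempty :=
    ⟨⟨0, hd⟩, Finset.mem_univ _⟩
  by_cases hir : i = sysR n (2 * k)
  · -- top level : the parent is the whole cube
    have hwn : n / 2 ^ (sysR n (2 * k) - i) = n := by
      rw [hir, Nat.sub_self, pow_zero, Nat.div_one]
    have hpar : parentSet n d k (2 * k) S i B = cube n d := by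
      rw [parentSet, if_pos hir]
    have hcard : (cube n d).ncard = n ^ d := by
      rw [cube_eq_pi n d, Set.ncard_coe_finset, Fintype.card_piFinset]
      simp [Nat.card_Icc]
    have hdim : ∀ i', n < 3 * (b i' + 1 - (a i' + k - 1)) := by
      intro i'
      have h1 := hs i'
      have h2 := (hab i').1
      have h3 := (hab i').2.1
      have h4 := (hab i').2.2.1
      omega
    rw [hpar, hcard]
    calc n ^ d = ∏ _i' : Fin d, n := by
          rw [Finset.prod_const, Finset.card_univ, Fintype.card_fin]
      _ < ∏ i', 3 * (b i' + 1 - (a i' + k - 1)) :=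
          Finset.prod_lt_prod_of_nonempty (fun i' _ => by omega)
            (fun i' _ => hdim i') huniv
      _ = 3 ^ d * ∏ i', (b i' + 1 - (a i' + k - 1)) := by
          rw [Finset.prod_mul_distrib, Finset.prod_const, Finset.card_univ,
            Fintype.card_fin]
      _ ≤ 3 ^ d * B.ncard := Nat.mul_le_mul_left _ hlow
  · -- intermediate level
    have hilt : i < sysR n (2 * k) := lt_of_le_of_ne hi hir
    obtain ⟨D, hGD⟩ := S.isGrid (i + 1) (by omega)
    have hdiv : n / 2 ^ (sysR n (2 * k) - i) = (n / 2 ^ (sysR n (2 * k) - (i + 1))) / 2 := by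
      rw [Nat.div_div_eq_div_mul, ← pow_succ]
      congr 2
      omega
    have hww'1 : 2 * (n / 2 ^ (sysR n (2 * k) - i)) ≤ n / 2 ^ (sysR n (2 * k) - (i + 1)) := by
      have := Nat.div_add_mod (n / 2 ^ (sysR n (2 * k) - (i + 1))) 2
      omega
    have hww'2 : n / 2 ^ (sysR n (2 * k) - (i + 1)) ≤ 2 * (n / 2 ^ (sysR n (2 * k) - i)) + 1 := by
      have := Nat.div_add_mod (n / 2 ^ (sysR n (2 * k) - (i + 1))) 2
      omega
    -- transfer of bad points from level i+1 to level i
    have hnst : S.G (i + 1) ⊆ S.G i := S.nested (i + 1) i (by omega) (by omega)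
    have htrans : ∀ m, GoodAt k C m → GoodAt k D m := by
      intro m hm
      have hx : (fun _ : Fin d => m) ∈
          cube n d \ gridOf n d k (n / 2 ^ (sysR n (2 * k) - i)) C :=
        (mem_compl_grid_iff (k := k) (by omega)).mpr (fun _ => hm)
      rw [← hGC] at hx
      have hx2 : (fun _ : Fin d => m) ∈ cube n d \ S.G (i + 1) :=
        ⟨hx.1, fun hc => hx.2 (hnst hc)⟩
      rw [hGD] at hx2
      exact (mem_compl_grid_iff (k := k) (by omega)).mp hx2 ⟨0, hd⟩
    have hbadT : ∀ m, BadAt k D m → BadAt k C m := by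
      intro m hbm
      obtain ⟨aa, bb, hii, hh1, hh2, hh3⟩ := hbm
      have hm1 : 1 ≤ m := le_trans hii.1 hh1
      have hmn : m ≤ n := le_trans hh2 hii.2.2.1
      rcases good_or_bad (k := k) C hm1 hmn with hg' | hb'
      · exact absurd (htrans m hg')
          (fun hgd => not_good_and_bad hgd ⟨aa, bb, hii, hh1, hh2, hh3⟩)
      · exact hb'
    -- parent intervals of x0
    have hx0D : x0 ∈ cube n d \ gridOf n d k (n / 2 ^ (sysR n (2 * k) - (i + 1))) D := by
      rw [← hGD]
      refine ⟨hx0c.1, fun hc => ?_⟩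
      rw [← hGC] at hx0c
      exact hx0c.2 (hnst hc)
    choose a' b' hab' ha' hb' hg' using
      (mem_compl_grid_iff (k := k) (by omega)).mp hx0D
    -- the per-dimension bound
    have hdim : ∀ i', b' i' + 1 - (a' i' + k - 1) <
        3 * (b i' + 1 - (a i' + k - 1)) := by
      intro i'
      have h := dim_bound hk hwk hww'1 hww'2 hbadT (hab i') (hab' i')
        (ha i') (hb i') (ha' i') (hb' i')
      have h1 := hs i'
      have h2 := (hab i').1
      have h3 := (hab i').2.1
      have h4 := (hab' i').size
      have h5 := (hab' i').1
      have h6 := (hab' i').2.1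
      omega
    have hppos : ∀ i', 0 < b' i' + 1 - (a' i' + k - 1) := by
      intro i'
      have h4 := (hab' i').size
      have h5 := (hab' i').1
      have h6 := (hab' i').2.1
      omega
    -- the parent set is contained in the product of the parent runs
    have hparsub : parentSet n d k (2 * k) S i B ⊆
        ↑(Fintype.piFinset fun i' => Finset.Icc (a' i' + k - 1) (b' i')) := by
      rw [parentSet, if_neg hir]
      rintro y ⟨B', ⟨hB', hBB'⟩, hyB'⟩
      have hBD' : IsBlock n d (gridOf n d k (n / 2 ^ (sysR n (2 * k) - (i + 1))) D) B' := by
        have h := hB'; rw [hGD] at h; exact h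
      have hpath := hBD'.2.2.1 x0 (hBB' hx0) y hyB'
      have hconf := reach_confine hk hpath hab' (fun i' => ⟨ha' i', hb' i', hg' i'⟩)
      rw [Finset.mem_coe, Fintype.mem_piFinset]
      intro i'
      rw [Finset.mem_Icc]
      have := hconf i'
      omega
    have hup : (parentSet n d k (2 * k) S i B).ncard ≤
        ∏ i', (b' i' + 1 - (a' i' + k - 1)) := by
      calc (parentSet n d k (2 * k) S i B).ncard
          ≤ ((↑(Fintype.piFinset fun i' => Finset.Icc (a' i' + k - 1) (b' i')) :
              Set (Fin d → ℕ))).ncard :=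
            Set.ncard_le_ncard hparsub (Finset.finite_toSet _)
        _ = ∏ i', (b' i' + 1 - (a' i' + k - 1)) := by
            rw [Set.ncard_coe_finset, Fintype.card_piFinset]
            simp [Nat.card_Icc]
    calc (parentSet n d k (2 * k) S i B).ncard
        ≤ ∏ i', (b' i' + 1 - (a' i' + k - 1)) := hup
      _ < ∏ i', 3 * (b i' + 1 - (a i' + k - 1)) :=
          Finset.prod_lt_prod_of_nonempty (fun i' _ => hppos i')
            (fun i' _ => hdim i') huniv
      _ = 3 ^ d * ∏ i', (b i' + 1 - (a i' + k - 1)) := by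
          rw [Finset.prod_mul_distrib, Finset.prod_const, Finset.card_univ,
            Fintype.card_fin]
      _ ≤ 3 ^ d * B.ncard := Nat.mul_le_mul_left _ hlow
end

section
/- Fix a k-local property P = P(F) of [n]^d-arrays over Σ, an [n]^d-array A over Σ, and an (n,d,k,w)-system of grids (G_0,...,G_r). Let 0 ≤ i' < i ≤ r. If a G_i-block B is (P,A)-unrepairable, then there exists a (P,A)-unrepairable G_{i'}-block contained in B. -/
open Finset

namespace StmtAux

open Finset Relation

lemma nat_dist_def (x y : ℕ) : Nat.dist x y = (x - y) + (y - x) := rfl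

lemma takeSmallest_subset (I : Finset ℕ) (ℓ : ℕ) : takeSmallest I ℓ ⊆ I := by
  unfold takeSmallest; exact Finset.filter_subset _ _

lemma dropSmallest_subset (I : Finset ℕ) (ℓ : ℕ) : dropSmallest I ℓ ⊆ I := by
  unfold dropSmallest; exact Finset.sdiff_subset

lemma mem_takeSmallest_Icc {a b ℓ x : ℕ} :
    x ∈ takeSmallest (Finset.Icc a b) ℓ ↔ a ≤ x ∧ x ≤ b ∧ x < a + ℓ := by
  unfold takeSmallest
  rw [Finset.mem_filter]
  have hf : (Finset.Icc a b).filter (fun y => y ≤ x) = Finset.Icc a (min b x) := by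
    ext z
    simp only [Finset.mem_filter, Finset.mem_Icc]
    omega
  rw [hf, Nat.card_Icc, Finset.mem_Icc]
  omega

lemma mem_dropSmallest_Icc {a b ℓ x : ℕ} :
    x ∈ dropSmallest (Finset.Icc a b) ℓ ↔ a ≤ x ∧ x ≤ b ∧ a + ℓ ≤ x := by
  unfold dropSmallest
  rw [Finset.mem_sdiff, Finset.mem_Icc, mem_takeSmallest_Icc]
  omega

variable {n w' d k : ℕ}

lemma ipart_unique (P : IntervalPartition n w') {j j' : Fin P.t} {x : ℕ}
    (h : x ∈ P.I j) (h' : x ∈ P.I j') : j = j' := by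
  by_contra hne
  rcases lt_or_gt_of_ne hne with hlt | hlt
  · exact lt_irrefl x (P.ordered j j' hlt x h x h')
  · exact lt_irrefl x (P.ordered j' j hlt x h' x h)

/-- A value is free (w.r.t. partition `P` and width `k`) if it is in `[1,n]` and
in no strip. -/
def FreeV (P : IntervalPartition n w') (k x : ℕ) : Prop :=
  1 ≤ x ∧ x ≤ n ∧ ∀ j, x ∉ takeSmallest (P.I j) (k - 1)

lemma freeV_iff (P : IntervalPartition n w') {x : ℕ} :
    FreeV P k x ↔ ∃ j, x ∈ dropSmallest (P.I j) (k - 1) := by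
  constructor
  · rintro ⟨h1, h2, h3⟩
    obtain ⟨j, hj⟩ := P.cover x (by rw [Finset.mem_Icc]; omega)
    refine ⟨j, ?_⟩
    unfold dropSmallest
    exact Finset.mem_sdiff.2 ⟨hj, h3 j⟩
  · rintro ⟨j, hj⟩
    have hjI : x ∈ P.I j := dropSmallest_subset _ _ hj
    have hjnot : x ∉ takeSmallest (P.I j) (k - 1) := by
      unfold dropSmallest at hj
      exact (Finset.mem_sdiff.1 hj).2
    obtain ⟨a, b, ha, hab, hb, hI⟩ := P.interval j
    have hx : x ∈ Finset.Icc a b := hI ▸ hjI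
    rw [Finset.mem_Icc] at hx
    refine ⟨by omega, by omega, fun j' hj' => ?_⟩
    by_cases hjj : j' = j
    · exact hjnot (hjj ▸ hj')
    · exact hjj (ipart_unique P (takeSmallest_subset _ _ hj') hjI)

lemma drop_gap' (P : IntervalPartition n w') {j j' : Fin P.t} (hlt : j < j') {x y : ℕ}
    (hx : x ∈ dropSmallest (P.I j) (k - 1)) (hy : y ∈ dropSmallest (P.I j') (k - 1))
    (hk : 2 ≤ k) : x + k ≤ y := by
  obtain ⟨a', b', ha', hab', hb', hI'⟩ := P.interval j'
  have hy' : a' ≤ y ∧ y ≤ b' ∧ a' + (k - 1) ≤ y := by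
    rw [hI', mem_dropSmallest_Icc] at hy; exact hy
  have ha'mem : a' ∈ P.I j' := by rw [hI', Finset.mem_Icc]; omega
  have hxa : x < a' := P.ordered j j' hlt x (dropSmallest_subset _ _ hx) a' ha'mem
  omega

lemma drop_gap (P : IntervalPartition n w') {j j' : Fin P.t} (hne : j ≠ j') {x y : ℕ}
    (hx : x ∈ dropSmallest (P.I j) (k - 1)) (hy : y ∈ dropSmallest (P.I j') (k - 1))
    (hk : 2 ≤ k) : x + k ≤ y ∨ y + k ≤ x := by
  rcases lt_or_gt_of_ne hne with hlt | hlt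
  · exact Or.inl (drop_gap' P hlt hx hy hk)
  · exact Or.inr (drop_gap' P hlt hy hx hk)

lemma mem_compl_grid (P : IntervalPartition n w') {x : Fin d → ℕ} :
    x ∈ cube n d \ gridOf n d k w' P ↔ ∀ i, FreeV P k (x i) := by
  constructor
  · rintro ⟨hc, hg⟩ i
    exact ⟨(hc i).1, (hc i).2, fun j hj => hg ⟨hc, ⟨i, j, hj⟩⟩⟩
  · intro h
    refine ⟨fun i => ⟨(h i).1, (h i).2.1⟩, fun hg => ?_⟩
    obtain ⟨_, i, j, hj⟩ := hg
    exact (h i).2.2 j hj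

/-- The product box of free parts determined by `j : Fin d → Fin P.t`. -/
def BoxP (P : IntervalPartition n w') (d k : ℕ) (j : Fin d → Fin P.t) :
    Set (Fin d → ℕ) :=
  {y | ∀ i, y i ∈ dropSmallest (P.I (j i)) (k - 1)}

lemma boxP_subset (P : IntervalPartition n w') (j : Fin d → Fin P.t) :
    BoxP P d k j ⊆ cube n d \ gridOf n d k w' P := fun _ hy =>
  (mem_compl_grid P).2 fun i => (freeV_iff P).2 ⟨j i, hy i⟩

lemma exists_boxP (P : IntervalPartition n w') {x : Fin d → ℕ}
    (hx : x ∈ cube n d \ gridOf n d k w' P) : ∃ j, x ∈ BoxP P d k j := by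
  have h := (mem_compl_grid P).1 hx
  choose jf hjf using fun i => (freeV_iff P).1 (h i)
  exact ⟨jf, hjf⟩

lemma boxP_sep (P : IntervalPartition n w') {j j' : Fin d → Fin P.t} (hne : j ≠ j')
    {x y : Fin d → ℕ} (hx : x ∈ BoxP P d k j) (hy : y ∈ BoxP P d k j') (hk : 2 ≤ k) :
    ∃ i, k ≤ Nat.dist (x i) (y i) := by
  have : ∃ i, j i ≠ j' i := by
    by_contra hc; push_neg at hc; exact hne (funext hc)
  obtain ⟨i, hi⟩ := this
  rcases drop_gap P hi (hx i) (hy i) hk with h | h <;>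
    exact ⟨i, by rw [nat_dist_def]; omega⟩

lemma neighbor_exists {x y : Fin d → ℕ} (h : Neighbor x y) :
    ∃ i0, Nat.dist (x i0) (y i0) = 1 ∧ ∀ i, i ≠ i0 → x i = y i := by
  unfold Neighbor at h
  have hex : ∃ i0, Nat.dist (x i0) (y i0) ≠ 0 := by
    by_contra hc
    push_neg at hc
    rw [Finset.sum_eq_zero (fun i _ => hc i)] at h
    omega
  obtain ⟨i0, hi0⟩ := hex
  have hsplit : Nat.dist (x i0) (y i0)
      + ∑ i ∈ Finset.univ.erase i0, Nat.dist (x i) (y i) = 1 := by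
    exact (Finset.add_sum_erase Finset.univ (fun i => Nat.dist (x i) (y i))
      (Finset.mem_univ i0)).trans h
  have hrest : ∑ i ∈ Finset.univ.erase i0, Nat.dist (x i) (y i) = 0 := by omega
  refine ⟨i0, by omega, fun i hi => ?_⟩
  have h0 := (Finset.sum_eq_zero_iff.mp hrest) i (Finset.mem_erase.2 ⟨hi, Finset.mem_univ i⟩)
  rw [nat_dist_def] at h0
  omega

lemma neighbor_of_single {x y : Fin d → ℕ} (i0 : Fin d)
    (h1 : Nat.dist (x i0) (y i0) = 1) (h2 : ∀ i, i ≠ i0 → x i = y i) :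
    Neighbor x y := by
  unfold Neighbor
  rw [Finset.sum_eq_single i0 (fun b _ hb => by rw [h2 b hb, nat_dist_def]; omega)
    (fun h => absurd (Finset.mem_univ i0) h)]
  exact h1

lemma boxP_closed (P : IntervalPartition n w') (hk : 2 ≤ k) {j : Fin d → Fin P.t}
    {x y : Fin d → ℕ} (hx : x ∈ BoxP P d k j)
    (hy : y ∈ cube n d \ gridOf n d k w' P) (hnb : Neighbor x y) :
    y ∈ BoxP P d k j := by
  obtain ⟨i0, h1, h2⟩ := neighbor_exists hnb
  intro i
  by_cases hi : i = i0
  · subst hi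
    obtain ⟨j2, hj2⟩ := (freeV_iff P).1 ((mem_compl_grid P).1 hy i)
    have hj2i : j2 = j i := by
      by_contra hne
      rcases drop_gap P hne hj2 (hx i) hk with h | h <;>
        · rw [nat_dist_def] at h1; omega
    exact hj2i ▸ hj2
  · rw [← h2 i hi]; exact hx i

/-- The step relation on `cube \ grid`. -/
def Rel (P : IntervalPartition n w') (d k : ℕ) (a b : Fin d → ℕ) : Prop :=
  a ∈ cube n d \ gridOf n d k w' P ∧ b ∈ cube n d \ gridOf n d k w' P ∧ Neighbor a b

lemma boxP_walk (P : IntervalPartition n w') (hk : 2 ≤ k) (j : Fin d → Fin P.t)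
    (i0 : Fin d) : ∀ m (x : Fin d → ℕ), x ∈ BoxP P d k j →
    ∀ v, v ∈ dropSmallest (P.I (j i0)) (k - 1) → Nat.dist (x i0) v ≤ m →
    Relation.ReflTransGen (Rel P d k) x (Function.update x i0 v) := by
  intro m
  induction m with
  | zero =>
    intro x hx v hv hd
    have hxv : x i0 = v := by rw [nat_dist_def] at hd; omega
    rw [← hxv, Function.update_eq_self]
  | succ m ih =>
    intro x hx v hv hd
    by_cases he : x i0 = v
    · rw [← he, Function.update_eq_self]
    · obtain ⟨a, b, ha, hab, hb, hI⟩ := P.interval (j i0)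
      have hvm : a ≤ v ∧ v ≤ b ∧ a + (k - 1) ≤ v := by
        rw [hI, mem_dropSmallest_Icc] at hv; exact hv
      have hx0 : a ≤ x i0 ∧ x i0 ≤ b ∧ a + (k - 1) ≤ x i0 := by
        have := hx i0; rw [hI, mem_dropSmallest_Icc] at this; exact this
      set v1 : ℕ := if x i0 < v then x i0 + 1 else x i0 - 1 with hv1def
      have hv1 : v1 ∈ dropSmallest (P.I (j i0)) (k - 1) := by
        rw [hI, mem_dropSmallest_Icc, hv1def]
        split_ifs <;> omega
      set x' : Fin d → ℕ := Function.update x i0 v1 with hx'def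
      have hx' : x' ∈ BoxP P d k j := by
        intro i
        by_cases hi : i = i0
        · subst hi; rw [hx'def, Function.update_self]; exact hv1
        · rw [hx'def, Function.update_of_ne hi]; exact hx i
      have hnb : Neighbor x x' := by
        refine neighbor_of_single i0 ?_ fun i hi => ?_
        · rw [hx'def, Function.update_self, nat_dist_def, hv1def]
          split_ifs <;> omega
        · rw [hx'def, Function.update_of_ne hi]
      have hstep : Rel P d k x x' := ⟨boxP_subset P j hx, boxP_subset P j hx', hnb⟩
      have hupd : Function.update x' i0 v = Function.update x i0 v := by
        rw [hx'def, Function.update_idem]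
      have hdist : Nat.dist (x' i0) v ≤ m := by
        rw [hx'def, Function.update_self, nat_dist_def, hv1def]
        rw [nat_dist_def] at hd
        split_ifs <;> omega
      exact Relation.ReflTransGen.head hstep (hupd ▸ ih x' hx' v hv hdist)

lemma boxP_conn (P : IntervalPartition n w') (hk : 2 ≤ k) (j : Fin d → Fin P.t)
    {x y : Fin d → ℕ} (hx : x ∈ BoxP P d k j) (hy : y ∈ BoxP P d k j) :
    Relation.ReflTransGen (Rel P d k) x y := by
  suffices h : ∀ m (x : Fin d → ℕ), x ∈ BoxP P d k j →
      (Finset.univ.filter (fun i => x i ≠ y i)).card ≤ m →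
      Relation.ReflTransGen (Rel P d k) x y from h _ x hx le_rfl
  intro m
  induction m with
  | zero =>
    intro x hx hc
    have hxy : x = y := by
      funext i
      by_contra hne
      have : i ∈ Finset.univ.filter (fun i => x i ≠ y i) :=
        Finset.mem_filter.2 ⟨Finset.mem_univ i, hne⟩
      have := Finset.card_pos.2 ⟨i, this⟩
      omega
    rw [hxy]
  | succ m ih =>
    intro x hx hc
    by_cases hxy : x = y
    · rw [hxy]
    · have hne : ∃ i0, x i0 ≠ y i0 := by
        by_contra hcc; push_neg at hcc; exact hxy (funext hcc)
      obtain ⟨i0, hi0⟩ := hne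
      set x' : Fin d → ℕ := Function.update x i0 (y i0) with hx'def
      have hx' : x' ∈ BoxP P d k j := by
        intro i
        by_cases hi : i = i0
        · subst hi; rw [hx'def, Function.update_self]; exact hy i
        · rw [hx'def, Function.update_of_ne hi]; exact hx i
      have hwalk := boxP_walk P hk j i0 (Nat.dist (x i0) (y i0)) x hx (y i0) (hy i0) le_rfl
      have hsub : Finset.univ.filter (fun i => x' i ≠ y i) ⊆
          (Finset.univ.filter (fun i => x i ≠ y i)).erase i0 := by
        intro i hi
        rw [Finset.mem_filter] at hi
        by_cases h : i = i0
        · subst h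
          exfalso; apply hi.2; rw [hx'def, Function.update_self]
        · refine Finset.mem_erase.2 ⟨h, Finset.mem_filter.2 ⟨Finset.mem_univ i, ?_⟩⟩
          rw [hx'def, Function.update_of_ne h] at hi
          exact hi.2
      have hi0mem : i0 ∈ Finset.univ.filter (fun i => x i ≠ y i) :=
        Finset.mem_filter.2 ⟨Finset.mem_univ i0, hi0⟩
      have hcard : (Finset.univ.filter (fun i => x' i ≠ y i)).card ≤ m := by
        have h1 := Finset.card_le_card hsub
        rw [Finset.card_erase_of_mem hi0mem] at h1
        have h2 := Finset.card_pos.2 ⟨i0, hi0mem⟩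
        omega
      exact hwalk.trans (ih x' hx' hcard)

lemma boxP_isBlock (P : IntervalPartition n w') (hk : 2 ≤ k) (j : Fin d → Fin P.t)
    (hne : (BoxP P d k j).Nonempty) :
    IsBlock n d (gridOf n d k w' P) (BoxP P d k j) :=
  ⟨hne, boxP_subset P j, fun x hx y hy => boxP_conn P hk j hx hy,
    fun x hx y hy hnb => boxP_closed P hk hx hy hnb⟩

lemma block_eq_boxP (P : IntervalPartition n w') (hk : 2 ≤ k)
    {B : Set (Fin d → ℕ)} {j : Fin d → Fin P.t} {x : Fin d → ℕ}
    (hB : IsBlock n d (gridOf n d k w' P) B) (hxB : x ∈ B) (hxb : x ∈ BoxP P d k j) :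
    B = BoxP P d k j := by
  obtain ⟨hBne, hBsub, hBconn, hBcl⟩ := hB
  apply Set.Subset.antisymm
  · intro y hy
    have hpath := hBconn x hxB y hy
    clear hy
    induction hpath with
    | refl => exact hxb
    | tail hab hbc ih => exact boxP_closed P hk ih hbc.2.1 hbc.2.2
  · intro y hy
    have hpath := boxP_conn P hk j hxb hy
    clear hy
    induction hpath with
    | refl => exact hxB
    | tail hab hbc ih => exact hBcl _ ih _ hbc.2.1 hbc.2.2

lemma block_subset_block {G G' B C : Set (Fin d → ℕ)} (hGG : G ⊆ G')
    (hB : IsBlock n d G B) (hC : IsBlock n d G' C) {z : Fin d → ℕ}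
    (hzB : z ∈ B) (hzC : z ∈ C) : C ⊆ B := by
  intro y hy
  have hpath := hC.2.2.1 z hzC y hy
  clear hy
  induction hpath with
  | refl => exact hzB
  | tail hab hbc ih =>
    exact hB.2.2.2 _ ih _ ⟨hbc.2.1.1, fun hmem => hbc.2.1.2 (hGG hmem)⟩ hbc.2.2

lemma exists_freeV (P : IntervalPartition n w') (hk : 2 ≤ k)
    (hsz : ∀ j, k ≤ (P.I j).card) {c : ℕ} (hc1 : 1 ≤ c) (hcn : c + k - 1 ≤ n) :
    ∃ m, c ≤ m ∧ m ≤ c + k - 1 ∧ FreeV P k m := by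
  by_cases hfree : ∀ j, c ∉ takeSmallest (P.I j) (k - 1)
  · exact ⟨c, le_rfl, by omega, hc1, by omega, hfree⟩
  · push_neg at hfree
    obtain ⟨j, hj⟩ := hfree
    obtain ⟨a, b, ha, hab, hbn, hI⟩ := P.interval j
    rw [hI, mem_takeSmallest_Icc] at hj
    have hcard : k ≤ b + 1 - a := by
      have := hsz j; rw [hI, Nat.card_Icc] at this; exact this
    refine ⟨a + (k - 1), by omega, by omega, by omega, by omega, fun j' => ?_⟩
    by_cases hjj : j' = j
    · subst hjj; rw [hI, mem_takeSmallest_Icc]; omega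
    · intro hmem
      have hm1 : a + (k - 1) ∈ P.I j := by rw [hI, Finset.mem_Icc]; omega
      exact hjj (ipart_unique P (takeSmallest_subset _ _ hmem) hm1)

end StmtAux

open StmtAux

/-- If a `G_i`-block is `(P,A)`-unrepairable, then for any `i' < i`
there is a `(P,A)`-unrepairable `G_{i'}`-block contained in it. -/
theorem unrepairable_sub_block (n d k w : ℕ) (hd : 1 ≤ d) (hk : 2 ≤ k)
    (hkw : k ≤ w) (hwn : w ≤ n) {σ : Type*} (F : Set ((Fin d → ℕ) → σ))
    (A : (Fin d → ℕ) → σ) (S : GridSystem n d k w)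
    (i' i : ℕ) (hii : i' < i) (hi : i ≤ sysR n w)
    (B : Set (Fin d → ℕ)) (hB : IsBlock n d (S.G i) B)
    (hU : Unrepairable n d k F A B) :
    ∃ B' : Set (Fin d → ℕ), IsBlock n d (S.G i') B' ∧ B' ⊆ B ∧
      Unrepairable n d k F A B' := by
  classical
  by_contra hcon
  push_neg at hcon
  have hi'r : i' ≤ sysR n w := hii.le.trans hi
  obtain ⟨P, hP⟩ := S.isGrid i hi
  obtain ⟨P', hP'⟩ := S.isGrid i' hi'r
  have hkn : k ≤ n := hkw.trans hwn
  have hGG : S.G i ⊆ S.G i' := S.nested i i' hii.le hi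
  have hBgrid : IsBlock n d (gridOf n d k (n / 2 ^ (sysR n w - i)) P) B := by
    rw [← hP]; exact hB
  -- interval sizes at level i' are at least k
  have hw2 : w ≤ n / 2 ^ (sysR n w - i') := by
    have hw0 : 0 < w := by omega
    have hnw : n / w ≠ 0 := by
      have : 1 ≤ n / w := (Nat.one_le_div_iff hw0).2 hwn
      omega
    have hlog : 2 ^ sysR n w ≤ n / w := Nat.pow_log_le_self 2 hnw
    have hmul : 2 ^ sysR n w * w ≤ n :=
      le_trans (Nat.mul_le_mul_right w hlog) (Nat.div_mul_le_self n w)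
    have h1 : w ≤ n / 2 ^ sysR n w := by
      rw [Nat.le_div_iff_mul_le (by positivity : 0 < 2 ^ sysR n w), Nat.mul_comm]
      exact hmul
    exact le_trans h1 (Nat.div_le_div_left
      (Nat.pow_le_pow_right (by omega) (Nat.sub_le _ _))
      (by positivity))
  have hsz' : ∀ j, k ≤ (P'.I j).card := by
    intro j
    rcases P'.size j with h | h <;> omega
  -- choose repairs for all sub-blocks
  have hrep : ∀ C : Set (Fin d → ℕ), IsBlock n d (S.G i') C → C ⊆ B →
      ∃ A'', (∀ x ∈ blockBoundary n d k C, A'' x = A x) ∧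
        ¬ HasCopyIn n d k F A'' (blockClosure n d k C) := by
    intro C h1 h2
    have h3 := hcon C h1 h2
    unfold Unrepairable at h3
    push_neg at h3
    exact h3
  set rep : Set (Fin d → ℕ) → ((Fin d → ℕ) → σ) := fun C =>
    if h : IsBlock n d (S.G i') C ∧ C ⊆ B then (hrep C h.1 h.2).choose else A
    with hrepdef
  have rep_bd : ∀ C, ∀ h1 : IsBlock n d (S.G i') C, ∀ h2 : C ⊆ B,
      (∀ x ∈ blockBoundary n d k C, rep C x = A x) ∧
        ¬ HasCopyIn n d k F (rep C) (blockClosure n d k C) := by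
    intro C h1 h2
    have heq : rep C = (hrep C h1 h2).choose := by
      rw [hrepdef]; exact dif_pos ⟨h1, h2⟩
    rw [heq]
    exact (hrep C h1 h2).choose_spec
  -- uniqueness of the block containing a point
  have huniq : ∀ C C' : Set (Fin d → ℕ), ∀ x, IsBlock n d (S.G i') C →
      IsBlock n d (S.G i') C' → x ∈ C → x ∈ C' → C = C' := by
    intro C C' x h1 h2 hx hx'
    have h1' : IsBlock n d (gridOf n d k (n / 2 ^ (sysR n w - i')) P') C := by
      rw [← hP']; exact h1
    have h2' : IsBlock n d (gridOf n d k (n / 2 ^ (sysR n w - i')) P') C' := by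
      rw [← hP']; exact h2
    have hxg : x ∈ cube n d \ gridOf n d k (n / 2 ^ (sysR n w - i')) P' := by
      rw [← hP']; exact h1.2.1 hx
    obtain ⟨j, hj⟩ := exists_boxP P' hxg
    rw [block_eq_boxP P' hk h1' hx hj, block_eq_boxP P' hk h2' hx' hj]
  -- the combined repaired array
  set A' : (Fin d → ℕ) → σ := fun x =>
    if h : ∃ C, IsBlock n d (S.G i') C ∧ C ⊆ B ∧ x ∈ C then rep h.choose x else A x
    with hA'def
  have hA'mem : ∀ C, IsBlock n d (S.G i') C → C ⊆ B → ∀ x ∈ C, A' x = rep C x := by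
    intro C h1 h2 x hx
    have hex : ∃ C0, IsBlock n d (S.G i') C0 ∧ C0 ⊆ B ∧ x ∈ C0 := ⟨C, h1, h2, hx⟩
    rw [hA'def]
    simp only [dif_pos hex]
    congr 1
    exact huniq _ _ x hex.choose_spec.1 h1 hex.choose_spec.2.2 hx
  have hA'not : ∀ x, (¬ ∃ C, IsBlock n d (S.G i') C ∧ C ⊆ B ∧ x ∈ C) → A' x = A x := by
    intro x h
    rw [hA'def]
    simp only [dif_neg h]
  -- A' agrees with A on ∂B
  have hbd : ∀ x ∈ blockBoundary n d k B, A' x = A x := by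
    intro x hx
    apply hA'not
    rintro ⟨C, h1, h2, h3⟩
    exact hx.2 (h2 h3)
  obtain ⟨a, hval, hcopy, hbox⟩ := hU A' hbd
  -- find a point of the box that is free at level i'
  have hzex : ∃ z : Fin d → ℕ, (∀ i1, a i1 ≤ z i1 ∧ z i1 ≤ a i1 + k - 1) ∧
      ∀ i1, FreeV P' k (z i1) := by
    choose zf h1 h2 h3 using fun i1 : Fin d =>
      exists_freeV P' hk hsz' (hval i1).1
        (by have := (hval i1).2; omega : a i1 + k - 1 ≤ n)
    exact ⟨zf, fun i1 => ⟨h1 i1, h2 i1⟩, h3⟩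
  obtain ⟨z, hzbox, hzfree⟩ := hzex
  have hzG' : z ∈ cube n d \ gridOf n d k (n / 2 ^ (sysR n w - i')) P' :=
    (mem_compl_grid P').2 hzfree
  have hzclos : z ∈ blockClosure n d k B := hbox hzbox
  -- z belongs to B
  have hzB : z ∈ B := by
    obtain ⟨hzc, y, hyB, hyd⟩ := hzclos
    have hzG : z ∈ cube n d \ gridOf n d k (n / 2 ^ (sysR n w - i)) P := by
      refine ⟨hzG'.1, fun hmem => hzG'.2 ?_⟩
      rw [← hP']
      apply hGG
      rw [hP]
      exact hmem
    obtain ⟨jz, hjz⟩ := exists_boxP P hzG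
    have hyG : y ∈ cube n d \ gridOf n d k (n / 2 ^ (sysR n w - i)) P := by
      rw [← hP]; exact hB.2.1 hyB
    obtain ⟨jy, hjy⟩ := exists_boxP P hyG
    have hBeq : B = BoxP P d k jy := block_eq_boxP P hk hBgrid hyB hjy
    by_cases hjj : jz = jy
    · rw [hBeq]; exact hjj ▸ hjz
    · obtain ⟨i1, hi1⟩ := boxP_sep P hjj hjz hjy hk
      have := hyd i1
      omega
  -- the sub-block containing z
  obtain ⟨jz', hjz'⟩ := exists_boxP P' hzG'
  set C : Set (Fin d → ℕ) := BoxP P' d k jz' with hCdef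
  have hCblock : IsBlock n d (S.G i') C := by
    rw [hP']; exact boxP_isBlock P' hk jz' ⟨z, hjz'⟩
  have hCB : C ⊆ B := block_subset_block hGG hB hCblock hzB hjz'
  -- the copy's box lies inside the closure of C
  have hkC : kbox d k a ⊆ blockClosure n d k C := by
    intro x hxbox
    refine ⟨fun i1 => ?_, z, hjz', fun i1 => ?_⟩
    · have h1 := hval i1; have h2 := hxbox i1
      constructor <;> omega
    · have h1 := hxbox i1; have h2 := hzbox i1
      rw [nat_dist_def]
      have h3 := hval i1
      omega
  -- A' agrees with rep C on the closure of C
  have hagree : ∀ x ∈ blockClosure n d k C, A' x = rep C x := by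
    intro x hxc
    by_cases hxC : x ∈ C
    · exact hA'mem C hCblock hCB x hxC
    · obtain ⟨hxcube, y2, hy2C, hyd⟩ := hxc
      have hx1 : A' x = A x := by
        apply hA'not
        rintro ⟨C2, hC2b, hC2B, hxC2⟩
        have hC2b' : IsBlock n d (gridOf n d k (n / 2 ^ (sysR n w - i')) P') C2 := by
          rw [← hP']; exact hC2b
        have hxg : x ∈ cube n d \ gridOf n d k (n / 2 ^ (sysR n w - i')) P' := by
          rw [← hP']; exact hC2b.2.1 hxC2
        obtain ⟨j2, hj2⟩ := exists_boxP P' hxg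
        have hC2eq : C2 = BoxP P' d k j2 := block_eq_boxP P' hk hC2b' hxC2 hj2
        have hne : j2 ≠ jz' := by
          intro he
          exact hxC (by rw [hCdef, ← he]; exact hj2)
        obtain ⟨i1, hi1⟩ := boxP_sep P' hne hj2 hy2C hk
        have := hyd i1
        omega
      have hxbd : x ∈ blockBoundary n d k C := ⟨⟨hxcube, y2, hy2C, hyd⟩, hxC⟩
      rw [hx1]
      exact ((rep_bd C hCblock hCB).1 x hxbd).symm
  -- contradiction with the chosen repair of C
  apply (rep_bd C hCblock hCB).2
  refine ⟨a, hval, ?_, hkC⟩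
  obtain ⟨Spat, hS, hSA⟩ := hcopy
  refine ⟨Spat, hS, fun jj hjj => ?_⟩
  have hmem : (fun i1 => a i1 + jj i1 - 1) ∈ kbox d k a := by
    intro i1
    have h1 := hjj i1
    have h2 := hval i1
    show a i1 ≤ a i1 + jj i1 - 1 ∧ a i1 + jj i1 - 1 ≤ a i1 + k - 1
    omega
  rw [← hagree _ (hkC hmem)]
  exact hSA jj hjj
end
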